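/- Let k ≥ 3, let θ be a nontrivial equivalence relation on E_k, and let α be a prime affine relation on E_k. Let α₁ = {(a,b,c,d) ∈ α : (a,b) ∈ θ, (a,c) ∈ θ, (a,d) ∈ θ}. Then Pol(θ) ∩ Pol(α) ⊊ Pol(α₁) ⊊ Pol(θ). In particular, Pol(θ) ∩ Pol(α) is not maximal in Pol(θ). -/

import Mathlib

/-- A finitary operation on `Fin k`: a pair of an arity `n` and a function
`(Fin n → Fin k) → Fin k`. -/
abbrev Ops (k : ℕ) := Σ n : ℕ, ((Fin n → Fin k) → Fin k)

/-- The set of finitary operations preserving a binary relation `θ` on `Fin k`. -/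
def PolB {k : ℕ} (θ : Set (Fin k × Fin k)) : Set (Ops k) :=
  {f | ∀ a b : Fin f.1 → Fin k, (∀ i, (a i, b i) ∈ θ) → (f.2 a, f.2 b) ∈ θ}

/-- The set of finitary operations preserving an `h`-ary relation `ρ` on `Fin k`. -/
def PolH {k h : ℕ} (ρ : Set (Fin h → Fin k)) : Set (Ops k) :=
  {f | ∀ M : Fin h → Fin f.1 → Fin k,
    (∀ i, (fun j => M j i) ∈ ρ) → (fun j => f.2 (M j)) ∈ ρ}

/-- A clone: contains all projections and is closed under composition. -/
def IsClone {k : ℕ} (C : Set (Ops k)) : Prop :=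
  (∀ (n : ℕ) (i : Fin n), (⟨n, fun x => x i⟩ : Ops k) ∈ C) ∧
  (∀ (n m : ℕ) (f : (Fin n → Fin k) → Fin k) (g : Fin n → (Fin m → Fin k) → Fin k),
    (⟨n, f⟩ : Ops k) ∈ C → (∀ i, (⟨m, g i⟩ : Ops k) ∈ C) →
    (⟨m, fun x => f fun i => g i x⟩ : Ops k) ∈ C)

/-- `C` is maximal in `D`: `C ⊊ D` and no clone lies strictly between them. -/
def MaximalIn {k : ℕ} (C D : Set (Ops k)) : Prop :=
  C ⊂ D ∧ ∀ F : Set (Ops k), IsClone F → ¬(C ⊂ F ∧ F ⊂ D)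

/-- `θ` is an equivalence relation (as a set of pairs). -/
def IsEquivRel {A : Type*} (θ : Set (A × A)) : Prop :=
  (∀ a, (a, a) ∈ θ) ∧ (∀ a b, (a, b) ∈ θ → (b, a) ∈ θ) ∧
    (∀ a b c, (a, b) ∈ θ → (b, c) ∈ θ → (a, c) ∈ θ)

/-- The diagonal relation `Δ` on `Fin k`. -/
def diag (k : ℕ) : Set (Fin k × Fin k) := {p | p.1 = p.2}

/-- A nontrivial equivalence relation: `Δ ⊊ θ ⊊ (Fin k)²`. -/
def NontrivEquiv {k : ℕ} (θ : Set (Fin k × Fin k)) : Prop :=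
  IsEquivRel θ ∧ diag k ⊂ θ ∧ θ ⊂ Set.univ

/-- Relational composition `α ∘ β = {(a,c) : ∃ b, (a,b) ∈ α ∧ (b,c) ∈ β}`. -/
def relComp {k : ℕ} (α β : Set (Fin k × Fin k)) : Set (Fin k × Fin k) :=
  {p | ∃ b, (p.1, b) ∈ α ∧ (b, p.2) ∈ β}

/-- The set of equivalence classes of `θ`. -/
def classesOf {A : Type*} (θ : Set (A × A)) : Set (Set A) :=
  {S | ∃ a : A, S = {b | (a, b) ∈ θ}}

/-- Totally reflexive: every tuple with a repeated entry is in `ρ`. -/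
def TotallyReflexive {k h : ℕ} (ρ : Set (Fin h → Fin k)) : Prop :=
  ∀ v : Fin h → Fin k, (∃ i j : Fin h, i ≠ j ∧ v i = v j) → v ∈ ρ

/-- Totally symmetric: closed under all permutations of coordinates. -/
def TotallySymmetric {k h : ℕ} (ρ : Set (Fin h → Fin k)) : Prop :=
  ∀ (v : Fin h → Fin k) (σ : Equiv.Perm (Fin h)), v ∈ ρ → v ∘ ⇑σ ∈ ρ

/-- The center of an `h`-ary relation: elements `a` such that every tuple whose
first coordinate is `a` lies in `ρ`. -/
def center {k h : ℕ} (ρ : Set (Fin h → Fin k)) : Set (Fin k) :=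
  {a | ∀ v : Fin h → Fin k, (∀ i : Fin h, (i : ℕ) = 0 → v i = a) → v ∈ ρ}

/-- An `h`-ary central relation. -/
def IsCentralRel {k h : ℕ} (ρ : Set (Fin h → Fin k)) : Prop :=
  ρ ≠ Set.univ ∧ TotallyReflexive ρ ∧ TotallySymmetric ρ ∧ (center ρ).Nonempty

/-- `η = {(u₁,…,u_h) : (u₁,u₂) ∈ θ}` (0-indexed: first two coordinates θ-related). -/
def eta {k : ℕ} (h : ℕ) (θ : Set (Fin k × Fin k)) : Set (Fin h → Fin k) :=
  {v | ∀ i j : Fin h, (i : ℕ) = 0 → (j : ℕ) = 1 → (v i, v j) ∈ θ}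

/-- `ρ_{l,θ}`: tuples whose coordinates from position `l` onwards can be moved
inside their θ-classes so as to land in `ρ` (0-indexed coordinates). -/
def rhoTh {k h : ℕ} (l : ℕ) (θ : Set (Fin k × Fin k)) (ρ : Set (Fin h → Fin k)) :
    Set (Fin h → Fin k) :=
  {a | ∃ u : Fin h → Fin k, (∀ j : Fin h, l ≤ (j : ℕ) → (u j, a j) ∈ θ) ∧
    (fun j : Fin h => if (j : ℕ) < l then a j else u j) ∈ ρ}

/-- `ρ` is θ-closed: `ρ = ρ_{0,θ}`. -/
def ThetaClosed {k h : ℕ} (θ : Set (Fin k × Fin k)) (ρ : Set (Fin h → Fin k)) : Prop :=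
  ρ = rhoTh 0 θ ρ

/-- `γ_σ = {(a_{σ(1)},…,a_{σ(h)}) : a ∈ γ}`. -/
def permuted {k h : ℕ} (σ : Equiv.Perm (Fin h)) (γ : Set (Fin h → Fin k)) :
    Set (Fin h → Fin k) :=
  {w | w ∘ ⇑σ.symm ∈ γ}

/-- A transversal of order `l` for the θ-classes: a system of representatives
(pairwise θ-unrelated, meeting every class) such that every tuple whose
coordinates from position `l` onwards lie in `T` belongs to `ρ`. -/
def IsTransversal {k h : ℕ} (θ : Set (Fin k × Fin k)) (ρ : Set (Fin h → Fin k)) (l : ℕ)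
    (T : Set (Fin k)) : Prop :=
  (∀ u ∈ T, ∀ v ∈ T, u ≠ v → (u, v) ∉ θ) ∧
  (∀ a : Fin k, ∃ u ∈ T, (a, u) ∈ θ) ∧
  (∀ w : Fin h → Fin k, (∀ j : Fin h, l ≤ (j : ℕ) → w j ∈ T) → w ∈ ρ)

/-- `ρ` is weakly θ-closed of order `l` (`1 ≤ l ≤ h-1`). -/
def WeaklyThetaClosed {k h : ℕ} (θ : Set (Fin k × Fin k)) (ρ : Set (Fin h → Fin k))
    (l : ℕ) : Prop :=
  1 ≤ l ∧ l ≤ h - 1 ∧ (∃ T : Set (Fin k), IsTransversal θ ρ (l - 1) T) ∧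
  ρ = ⋂ σ : Equiv.Perm (Fin h), permuted σ (rhoTh l θ ρ)

/-- Type I: `η ⊆ ρ` and every θ-class contains a central element of `ρ`. -/
def TypeI {k h : ℕ} (θ : Set (Fin k × Fin k)) (ρ : Set (Fin h → Fin k)) : Prop :=
  eta h θ ⊆ ρ ∧ ∀ a : Fin k, ∃ c : Fin k, (a, c) ∈ θ ∧ c ∈ center ρ

/-- Type II: `ρ` is θ-closed. -/
def TypeII {k h : ℕ} (θ : Set (Fin k × Fin k)) (ρ : Set (Fin h → Fin k)) : Prop :=
  ThetaClosed θ ρ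

/-- Type III: `ρ` is weakly θ-closed of some order and `η ⊆ ρ`. -/
def TypeIII {k h : ℕ} (θ : Set (Fin k × Fin k)) (ρ : Set (Fin h → Fin k)) : Prop :=
  (∃ l : ℕ, WeaklyThetaClosed θ ρ l) ∧ eta h θ ⊆ ρ

/-- `τ` is a diagonal relation through `θ`. -/
def IsDiagonal {k h : ℕ} (θ : Set (Fin k × Fin k)) (τ : Set (Fin h → Fin k)) : Prop :=
  ∃ (ε₁ : Setoid (Fin h)) (ε₂ : Set (Fin h × Fin h)),
    (∀ p ∈ ε₂, (∀ j, ε₁.r p.1 j → p.1 ≤ j) ∧ (∀ j, ε₁.r p.2 j → p.2 ≤ j)) ∧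
    (∀ i : Fin h, (∀ j, ε₁.r i j → i ≤ j) → (i, i) ∈ ε₂) ∧
    (∀ i j, (i, j) ∈ ε₂ → (j, i) ∈ ε₂) ∧
    (∀ i j l, (i, j) ∈ ε₂ → (j, l) ∈ ε₂ → (i, l) ∈ ε₂) ∧
    τ = {a | (∀ i j, ε₁.r i j → a i = a j) ∧ (∀ i j, (i, j) ∈ ε₂ → (a i, a j) ∈ θ)}

/-- `ρ^l_{0,θ}`: `l`-tuples which can be moved inside their θ-classes so that
every `h`-tuple with all entries among the moved elements lies in `ρ`. -/
def rhoPow {k h : ℕ} (l : ℕ) (θ : Set (Fin k × Fin k)) (ρ : Set (Fin h → Fin k)) :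
    Set (Fin l → Fin k) :=
  {u | ∃ e : Fin l → Fin k, (∀ i, (e i, u i) ∈ θ) ∧
    ∀ w : Fin h → Fin k, (∀ j, ∃ i, w j = e i) → w ∈ ρ}

/-- An `h`-regular family of equivalence relations. -/
def IsHRegFamily {A : Type*} (h : ℕ) {m : ℕ} (T : Fin m → Set (A × A)) : Prop :=
  (∀ i, IsEquivRel (T i)) ∧
  (∀ i, (classesOf (T i)).ncard = h) ∧
  (∀ x : Fin m → A, (⋂ i, {b | (x i, b) ∈ T i}).Nonempty)

/-- The `h`-regular relation determined by the family `T`: tuples whose set of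
components meets at most `h-1` classes of each member of the family. -/
def hRegRel {A : Type*} (h : ℕ) {m : ℕ} (T : Fin m → Set (A × A)) : Set (Fin h → A) :=
  {a | ∀ i : Fin m, {S ∈ classesOf (T i) | ∃ j : Fin h, a j ∈ S}.ncard ≤ h - 1}

/-- `ρ` is an `h`-regular relation: determined by some `h`-regular family. -/
def IsHRegularRel {A : Type*} (h : ℕ) (ρ : Set (Fin h → A)) : Prop :=
  ∃ m : ℕ, 1 ≤ m ∧ ∃ T : Fin m → Set (A × A), IsHRegFamily h T ∧ ρ = hRegRel h T

/-- `n`-fold sum of `a` with respect to an addition `add` and zero `e`. -/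
def nIter {k : ℕ} (add : Fin k → Fin k → Fin k) (e : Fin k) (a : Fin k) : ℕ → Fin k
  | 0 => e
  | n + 1 => add a (nIter add e a n)

/-- For a nontrivial equivalence relation `θ` and a prime affine relation `α`
on `E_k` (`k ≥ 3`), `Pol(θ) ∩ Pol(α) ⊊ Pol(α₁) ⊊ Pol(θ)`; in particular
`Pol(θ) ∩ Pol(α)` is not maximal in `Pol(θ)`. -/
theorem stmt1 (k : ℕ) (hk : 3 ≤ k)
    (θ : Set (Fin k × Fin k)) (hθ : NontrivEquiv θ)
    (add : Fin k → Fin k → Fin k) (e : Fin k)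
    (hcomm : ∀ a b, add a b = add b a)
    (hassoc : ∀ a b c, add (add a b) c = add a (add b c))
    (hzero : ∀ a, add e a = a)
    (hinv : ∀ a, ∃ b, add a b = e)
    (p : ℕ) (hp : p.Prime)
    (hord : ∀ a, nIter add e a p = e)
    (α : Set (Fin 4 → Fin k))
    (hα : α = {v | add (v 0) (v 1) = add (v 2) (v 3)})
    (α₁ : Set (Fin 4 → Fin k))
    (hα₁ : α₁ = {v ∈ α | (v 0, v 1) ∈ θ ∧ (v 0, v 2) ∈ θ ∧ (v 0, v 3) ∈ θ}) :
    (PolB θ ∩ PolH α ⊂ PolH α₁) ∧ (PolH α₁ ⊂ PolB θ) ∧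
      ¬ MaximalIn (PolB θ ∩ PolH α) (PolB θ) := by
    classical
  obtain ⟨⟨hrefl, hsym, htrans⟩, hdiag, huniv⟩ := hθ
  -- a ≠ b with (a,b) ∈ θ
  obtain ⟨⟨a, b⟩, habθ, habd⟩ := Set.exists_of_ssubset hdiag
  have hne : a ≠ b := fun h => habd h
  -- an element g with (a, g) ∉ θ
  obtain ⟨⟨c, d⟩, -, hcd⟩ := Set.exists_of_ssubset huniv
  have hg : ∃ g : Fin k, (a, g) ∉ θ := by
    by_cases h1 : (a, c) ∈ θ
    · refine ⟨d, fun h2 => hcd ?_⟩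
      exact htrans c a d (hsym a c h1) h2
    · exact ⟨c, h1⟩
  obtain ⟨g, hag⟩ := hg
  have hga : g ≠ a := fun h => hag (h ▸ hrefl a)
  -- cancellation
  have hzero' : ∀ x, add x e = x := fun x => (hcomm x e).trans (hzero x)
  have hcancel : ∀ x y z : Fin k, add x y = add x z → y = z := by
    intro x y z h
    obtain ⟨x', hx'⟩ := hinv x
    have hx'' : add x' x = e := (hcomm x' x).trans hx'
    calc y = add (add x' x) y := by rw [hx'', hzero]
      _ = add x' (add x y) := hassoc x' x y
      _ = add x' (add x z) := by rw [h]
      _ = add (add x' x) z := (hassoc x' x z).symm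
      _ = z := by rw [hx'', hzero]
  -- membership in α₁
  have hmem : ∀ v : Fin 4 → Fin k, v ∈ α₁ ↔
      (add (v 0) (v 1) = add (v 2) (v 3)) ∧
        (v 0, v 1) ∈ θ ∧ (v 0, v 2) ∈ θ ∧ (v 0, v 3) ∈ θ := by
    intro v
    rw [hα₁, Set.mem_sep_iff, hα, Set.mem_setOf_eq]
  -- inclusion : PolB θ ∩ PolH α ⊆ PolH α₁
  have sub1 : PolB θ ∩ PolH α ⊆ PolH α₁ := by
    rintro f ⟨hfθ, hfα⟩ M hM
    have hMi := fun i => (hmem _).1 (hM i)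
    rw [hmem]
    refine ⟨?_, ?_, ?_, ?_⟩
    · have h := hfα M (fun i => by rw [hα]; exact (hMi i).1)
      rw [hα, Set.mem_setOf_eq] at h
      exact h
    · exact hfθ (M 0) (M 1) (fun i => (hMi i).2.1)
    · exact hfθ (M 0) (M 2) (fun i => (hMi i).2.2.1)
    · exact hfθ (M 0) (M 3) (fun i => (hMi i).2.2.2)
  -- inclusion : PolH α₁ ⊆ PolB θ
  have sub2 : PolH α₁ ⊆ PolB θ := by
    intro f hf aa bb habb
    have h := hf ![aa, bb, aa, bb] (by
      intro i
      rw [hmem]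
      exact ⟨rfl, habb i, hrefl _, habb i⟩)
    rw [hmem] at h
    exact h.2.1
  -- witness f₁ : identity on the class of a, constant a elsewhere
  set f₁ : Ops k := ⟨1, fun x => if (a, x 0) ∈ θ then x 0 else a⟩ with hf₁def
  have hf₁mem : f₁ ∈ PolH α₁ := by
    intro M hM
    have hv := (hmem _).1 (hM 0)
    rw [hmem]
    by_cases h0 : (a, M 0 0) ∈ θ
    · have key : ∀ j : Fin 4, (if (a, M j 0) ∈ θ then M j 0 else a) = M j 0 := by
        intro j
        have hj : (a, M j 0) ∈ θ := by
          fin_cases j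
          · exact h0
          · exact htrans a (M 0 0) (M 1 0) h0 hv.2.1
          · exact htrans a (M 0 0) (M 2 0) h0 hv.2.2.1
          · exact htrans a (M 0 0) (M 3 0) h0 hv.2.2.2
        exact if_pos hj
      simp only [f₁, key]
      exact hv
    · have key : ∀ j : Fin 4, (if (a, M j 0) ∈ θ then M j 0 else a) = a := by
        intro j
        have hj : (a, M j 0) ∉ θ := by
          intro hj
          apply h0
          fin_cases j
          · exact hj
          · exact htrans a (M 1 0) (M 0 0) hj (hsym _ _ hv.2.1)
          · exact htrans a (M 2 0) (M 0 0) hj (hsym _ _ hv.2.2.1)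
          · exact htrans a (M 3 0) (M 0 0) hj (hsym _ _ hv.2.2.2)
        exact if_neg hj
      simp only [f₁, key]
      exact ⟨by trivial, hrefl a, hrefl a, hrefl a⟩
  have hf₁not : f₁ ∉ PolH α := by
    intro hf
    obtain ⟨g', hg'⟩ := hinv g
    set s : Fin k := add (add a b) g' with hs
    have hVα : add a b = add g s := by
      rw [hs, hcomm (add a b) g', ← hassoc g g' (add a b), hg', hzero]
    have h := hf (fun j _ => (![a, b, g, s] : Fin 4 → Fin k) j) (by
      intro i
      rw [hα, Set.mem_setOf_eq]
      exact hVα)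
    rw [hα, Set.mem_setOf_eq] at h
    simp only [f₁, Matrix.cons_val_zero, Matrix.cons_val_one, Matrix.head_cons,
      Matrix.cons_val_two, Matrix.tail_cons, Matrix.cons_val_three] at h
    simp only [hrefl, habθ, hag, ↓reduceIte] at h
    by_cases hsθ : (a, s) ∈ θ
    · simp only [hsθ, ↓reduceIte] at h
      have hb : b = s := hcancel a b s h
      have : g = a := by
        apply hcancel b g a
        calc add b g = add s g := by rw [hb]
          _ = add (add a b) (add g' g) := by rw [hs]; exact hassoc _ _ _
          _ = add (add a b) e := by rw [hcomm g' g, hg']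
          _ = add a b := hzero' _
          _ = add b a := hcomm a b
      exact hga this
    · simp only [hsθ, ↓reduceIte] at h
      exact hne (hcancel a b a h).symm
  -- witness f₂
  set f₂ : Ops k := ⟨2, fun x => if x 0 = a ∧ x 1 = b then b else a⟩ with hf₂def
  have hf₂mem : f₂ ∈ PolB θ := by
    intro aa bb _
    have hpair : ∀ u v : Fin k, (u = a ∨ u = b) → (v = a ∨ v = b) → (u, v) ∈ θ := by
      intro u v hu hv
      rcases hu with hu | hu <;> rcases hv with hv | hv <;> rw [hu, hv]
      · exact hrefl a
      · exact habθ
      · exact hsym _ _ habθ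
      · exact hrefl b
    have hval : ∀ z : Fin 2 → Fin k, f₂.2 z = a ∨ f₂.2 z = b := by
      intro z
      simp only [f₂]
      split
      · exact Or.inr rfl
      · exact Or.inl rfl
    exact hpair _ _ (hval aa) (hval bb)
  have hf₂not : f₂ ∉ PolH α₁ := by
    intro hf
    have h := hf (![![a, a], ![b, b], ![b, a], ![a, b]]) (by
      intro i
      fin_cases i <;> rw [hmem]
      · exact ⟨hcomm a b, habθ, habθ, hrefl a⟩
      · exact ⟨by trivial, habθ, hrefl a, habθ⟩)
    rw [hmem] at h
    have h1 : add (f₂.2 ![a, a]) (f₂.2 ![b, b]) = add (f₂.2 ![b, a]) (f₂.2 ![a, b]) := h.1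
    have e0 : f₂.2 ![a, a] = a := if_neg (fun hc => hne hc.2)
    have e1 : f₂.2 ![b, b] = a := if_neg (fun hc => hne hc.1.symm)
    have e2 : f₂.2 ![b, a] = a := if_neg (fun hc => hne hc.1.symm)
    have e3 : f₂.2 ![a, b] = b := if_pos ⟨rfl, rfl⟩
    rw [e0, e1, e2, e3] at h1
    exact hne (hcancel a a b h1)
  -- PolH α₁ is a clone
  have hclone : IsClone (PolH α₁) := by
    constructor
    · intro n i M hM
      exact hM i
    · intro n m f gg hf hgg M hM
      exact hf (fun j i => gg i (M j)) (fun i => hgg i M hM)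
  have ss1 : PolB θ ∩ PolH α ⊂ PolH α₁ := by
    rw [Set.ssubset_def]
    exact ⟨sub1, fun hc => hf₁not (hc hf₁mem).2⟩
  have ss2 : PolH α₁ ⊂ PolB θ := by
    rw [Set.ssubset_def]
    exact ⟨sub2, fun hc => hf₂not (hc hf₂mem)⟩
  refine ⟨ss1, ss2, ?_⟩
  rintro ⟨-, hmax⟩
  exact hmax (PolH α₁) hclone ⟨ss1, ss2⟩
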